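/- arXiv:1807.05042 — 4 statements merged into one kernel-verified Lean document; each statement's English description precedes it below -/
import Mathlib

section
/- Let X, Y be Hilbert spaces, A, A_η : X → Y bounded linear operators with ‖A − A_η‖ ≤ η, and α > 0. Then ‖(A_η*A_η + αI)⁻¹ − (A*A + αI)⁻¹‖ ≤ η/α^{3/2}. (In fact, the bound with constant C = 1, i.e., ≤ C·η·α^{-3/2}, holds.) -/
open ContinuousLinearMap Filter

variable {X Y : Type*} [NormedAddCommGroup X] [InnerProductSpace ℝ X] [CompleteSpace X]
  [NormedAddCommGroup Y] [InnerProductSpace ℝ Y] [CompleteSpace Y]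

private lemma sqrt_trick {a c : ℝ} (ha : 0 ≤ a) (hc : 0 ≤ c) (h : a ^ 2 ≤ c ^ 2) : a ≤ c := by
  have := Real.sqrt_le_sqrt h
  rwa [Real.sqrt_sq ha, Real.sqrt_sq hc] at this

private lemma aux_inner (A : X →L[ℝ] Y) (α : ℝ) (x : X) :
    (inner ℝ ((adjoint A ∘L A + α • (1 : X →L[ℝ] X)) x) x : ℝ) = ‖A x‖ ^ 2 + α * ‖x‖ ^ 2 := by
  simp [ContinuousLinearMap.add_apply, ContinuousLinearMap.smul_apply,
    ContinuousLinearMap.one_apply, inner_add_left, real_inner_smul_left,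
    ContinuousLinearMap.adjoint_inner_left, real_inner_self_eq_norm_sq]

private lemma aux_isUnit (A : X →L[ℝ] Y) {α : ℝ} (hα : 0 < α) :
    IsUnit (adjoint A ∘L A + α • (1 : X →L[ℝ] X)) := by
  apply ContinuousLinearMap.isUnit_of_forall_le_norm_inner_map _ (c := α.toNNReal)
    (by simpa using hα)
  intro x
  rw [aux_inner, Real.norm_eq_abs, abs_of_nonneg (by positivity), Real.coe_toNNReal _ hα.le]
  nlinarith [sq_nonneg ‖A x‖]

private lemma aux_apply (A : X →L[ℝ] Y) {α : ℝ} (hα : 0 < α) (z : X) :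
    (adjoint A ∘L A + α • (1 : X →L[ℝ] X))
      (Ring.inverse (adjoint A ∘L A + α • (1 : X →L[ℝ] X)) z) = z := by
  rw [← ContinuousLinearMap.mul_apply, Ring.mul_inverse_cancel _ (aux_isUnit A hα),
    ContinuousLinearMap.one_apply]

/-- the key quadratic identity for `x = B⁻¹ z`. -/
private lemma aux_key (A : X →L[ℝ] Y) {α : ℝ} (hα : 0 < α) (z : X) :
    ‖A (Ring.inverse (adjoint A ∘L A + α • (1 : X →L[ℝ] X)) z)‖ ^ 2
      + α * ‖Ring.inverse (adjoint A ∘L A + α • (1 : X →L[ℝ] X)) z‖ ^ 2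
      = inner ℝ z (Ring.inverse (adjoint A ∘L A + α • (1 : X →L[ℝ] X)) z) := by
  rw [← aux_inner A α]
  rw [aux_apply A hα z]

private lemma aux_norm_inv (A : X →L[ℝ] Y) {α : ℝ} (hα : 0 < α) :
    ‖Ring.inverse (adjoint A ∘L A + α • (1 : X →L[ℝ] X))‖ ≤ 1 / α := by
  refine opNorm_le_bound _ (by positivity) fun z => ?_
  set x := Ring.inverse (adjoint A ∘L A + α • (1 : X →L[ℝ] X)) z with hx
  have h1 := aux_key A hα z
  have h2 : (inner ℝ z x : ℝ) ≤ ‖z‖ * ‖x‖ := real_inner_le_norm z x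
  rw [one_div, inv_mul_eq_div, le_div_iff₀ hα]
  nlinarith [sq_nonneg ‖A x‖, norm_nonneg x, norm_nonneg z, sq_nonneg (‖x‖ - ‖z‖)]

private lemma aux_norm_inv_adj (A : X →L[ℝ] Y) {α : ℝ} (hα : 0 < α) :
    ‖Ring.inverse (adjoint A ∘L A + α • (1 : X →L[ℝ] X)) ∘L adjoint A‖
      ≤ 1 / (2 * Real.sqrt α) := by
  have hs : 0 < Real.sqrt α := Real.sqrt_pos.2 hα
  refine opNorm_le_bound _ (by positivity) fun y => ?_
  rw [ContinuousLinearMap.comp_apply]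
  set x := Ring.inverse (adjoint A ∘L A + α • (1 : X →L[ℝ] X)) (adjoint A y) with hx
  have h1 := aux_key A hα (adjoint A y)
  rw [ContinuousLinearMap.adjoint_inner_left] at h1
  have h2 : (inner ℝ y (A x) : ℝ) ≤ ‖y‖ * ‖A x‖ := real_inner_le_norm y (A x)
  rw [one_div, inv_mul_eq_div, le_div_iff₀ (by positivity)]
  refine sqrt_trick (by positivity) (norm_nonneg y) ?_
  have hαs : Real.sqrt α ^ 2 = α := Real.sq_sqrt hα.le
  nlinarith [sq_nonneg (2 * ‖A x‖ - ‖y‖), norm_nonneg x, norm_nonneg (A x)]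

private lemma aux_norm_comp_inv (A : X →L[ℝ] Y) {α : ℝ} (hα : 0 < α) :
    ‖A ∘L Ring.inverse (adjoint A ∘L A + α • (1 : X →L[ℝ] X))‖
      ≤ 1 / (2 * Real.sqrt α) := by
  have hs : 0 < Real.sqrt α := Real.sqrt_pos.2 hα
  refine opNorm_le_bound _ (by positivity) fun z => ?_
  rw [ContinuousLinearMap.comp_apply]
  set x := Ring.inverse (adjoint A ∘L A + α • (1 : X →L[ℝ] X)) z with hx
  have h1 := aux_key A hα z
  have h2 : (inner ℝ z x : ℝ) ≤ ‖z‖ * ‖x‖ := real_inner_le_norm z x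
  rw [one_div, inv_mul_eq_div, le_div_iff₀ (by positivity)]
  refine sqrt_trick (by positivity) (norm_nonneg z) ?_
  have hαs : Real.sqrt α ^ 2 = α := Real.sq_sqrt hα.le
  nlinarith [sq_nonneg (‖z‖ - 2 * α * ‖x‖), norm_nonneg x, norm_nonneg (A x)]

theorem stmt_3 (A Aη : X →L[ℝ] Y) (η : ℝ) (hη : ‖A - Aη‖ ≤ η) (α : ℝ) (hα : 0 < α) :
    ‖Ring.inverse (adjoint Aη ∘L Aη + α • (1 : X →L[ℝ] X)) -
        Ring.inverse (adjoint A ∘L A + α • (1 : X →L[ℝ] X))‖ ≤ η / α ^ ((3 : ℝ) / 2) := by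
  have hη0 : 0 ≤ η := le_trans (norm_nonneg _) hη
  have hs : 0 < Real.sqrt α := Real.sqrt_pos.2 hα
  set B := adjoint A ∘L A + α • (1 : X →L[ℝ] X) with hB
  set Bη := adjoint Aη ∘L Aη + α • (1 : X →L[ℝ] X) with hBη
  set T := Ring.inverse B with hT
  set Tη := Ring.inverse Bη with hTη
  have hU : IsUnit B := aux_isUnit A hα
  have hV : IsUnit Bη := aux_isUnit Aη hα
  -- difference formula
  have hdiff : Tη - T = Tη * (B - Bη) * T := by
    have e1 : Tη * B = Tη * (B - Bη) + 1 := by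
      rw [mul_sub, Ring.inverse_mul_cancel _ hV]; abel
    calc Tη - T = Tη * (B * T) - T := by rw [Ring.mul_inverse_cancel _ hU, mul_one]
      _ = (Tη * B) * T - T := by rw [mul_assoc]
      _ = (Tη * (B - Bη) + 1) * T - T := by rw [e1]
      _ = Tη * (B - Bη) * T := by rw [add_mul, one_mul, add_sub_cancel_right]
  have hsplit : B - Bη = adjoint Aη ∘L (A - Aη) + adjoint (A - Aη) ∘L A := by
    ext x
    simp only [hB, hBη, ContinuousLinearMap.sub_apply, ContinuousLinearMap.add_apply,
      ContinuousLinearMap.comp_apply, ContinuousLinearMap.smul_apply, map_sub,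
      ContinuousLinearMap.one_apply]
    abel
  have hre : Tη - T = (Tη ∘L adjoint Aη) ∘L ((A - Aη) ∘L T)
      + (Tη ∘L adjoint (A - Aη)) ∘L (A ∘L T) := by
    rw [hdiff, hsplit]
    ext x
    simp [ContinuousLinearMap.mul_apply, ContinuousLinearMap.add_apply,
      ContinuousLinearMap.comp_apply]
  have hT1 : ‖T‖ ≤ 1 / α := aux_norm_inv A hα
  have hTη1 : ‖Tη‖ ≤ 1 / α := aux_norm_inv Aη hα
  have h2 : ‖Tη ∘L adjoint Aη‖ ≤ 1 / (2 * Real.sqrt α) := aux_norm_inv_adj Aη hα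
  have h3 : ‖A ∘L T‖ ≤ 1 / (2 * Real.sqrt α) := aux_norm_comp_inv A hα
  have hadj : ‖adjoint (A - Aη)‖ ≤ η := by
    rw [LinearIsometryEquiv.norm_map]; exact hη
  have hb1 : ‖(Tη ∘L adjoint Aη) ∘L ((A - Aη) ∘L T)‖ ≤ 1 / (2 * Real.sqrt α) * (η * (1 / α)) := by
    refine le_trans (opNorm_comp_le _ _) ?_
    have : ‖(A - Aη) ∘L T‖ ≤ η * (1 / α) :=
      le_trans (opNorm_comp_le _ _) (mul_le_mul hη hT1 (norm_nonneg _) hη0)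
    exact mul_le_mul h2 this (norm_nonneg _) (by positivity)
  have hb2 : ‖(Tη ∘L adjoint (A - Aη)) ∘L (A ∘L T)‖
      ≤ 1 / α * η * (1 / (2 * Real.sqrt α)) := by
    refine le_trans (opNorm_comp_le _ _) ?_
    have h4 : ‖Tη ∘L adjoint (A - Aη)‖ ≤ 1 / α * η :=
      le_trans (opNorm_comp_le _ _) (mul_le_mul hTη1 hadj (norm_nonneg _) (by positivity))
    exact mul_le_mul h4 h3 (norm_nonneg _) (by positivity)
  have hpow : α ^ ((3 : ℝ) / 2) = α * Real.sqrt α := by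
    rw [show (3 : ℝ) / 2 = 1 + 1 / 2 by norm_num, Real.rpow_add hα, Real.rpow_one,
      ← Real.sqrt_eq_rpow]
  calc ‖Tη - T‖ ≤ ‖(Tη ∘L adjoint Aη) ∘L ((A - Aη) ∘L T)‖
        + ‖(Tη ∘L adjoint (A - Aη)) ∘L (A ∘L T)‖ := by rw [hre]; exact norm_add_le _ _
    _ ≤ 1 / (2 * Real.sqrt α) * (η * (1 / α)) + 1 / α * η * (1 / (2 * Real.sqrt α)) := by
        exact add_le_add hb1 hb2
    _ = η / (α * Real.sqrt α) := by field_simp; ring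
    _ = η / α ^ ((3 : ℝ) / 2) := by rw [hpow]
end

section
/- Let X, Y be Hilbert spaces, A, A_η : X → Y bounded with ‖A − A_η‖ ≤ η, and α > 0. Then ‖(A_η*A_η + αI)⁻¹ A_η* − (A*A + αI)⁻¹ A*‖ ≤ (5/4)·η/α. -/
open ContinuousLinearMap Filter

section Aux

open InnerProductSpace

variable {X Y : Type*} [NormedAddCommGroup X] [InnerProductSpace ℝ X] [CompleteSpace X]
  [NormedAddCommGroup Y] [InnerProductSpace ℝ Y] [CompleteSpace Y]

/-- The Tikhonov-regularized normal operator `A*A + αI`. -/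
noncomputable def regOp (A : X →L[ℝ] Y) (α : ℝ) : X →L[ℝ] X := adjoint A ∘L A + α • 1

lemma regOp_inner (A : X →L[ℝ] Y) (α : ℝ) (x : X) :
    ⟪regOp A α x, x⟫_ℝ = ‖A x‖ ^ 2 + α * ‖x‖ ^ 2 := by
  simp [regOp, inner_add_left, adjoint_inner_left, real_inner_smul_left,
    real_inner_self_eq_norm_sq]

lemma isUnit_regOp (A : X →L[ℝ] Y) {α : ℝ} (hα : 0 < α) : IsUnit (regOp A α) := by
  set B : X →L⋆[ℝ] X →L[ℝ] ℝ := (innerSL ℝ).comp (regOp A α) with hB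
  have coercive : IsCoercive B := by
    refine ⟨α, hα, fun u => ?_⟩
    have : B u u = ‖A u‖ ^ 2 + α * ‖u‖ ^ 2 := regOp_inner A α u
    nlinarith [sq_nonneg ‖A u‖, sq_nonneg ‖u‖]
  have he : regOp A α = (coercive.continuousLinearEquivOfBilin : X →L[ℝ] X) := by
    ext v
    exact coercive.unique_continuousLinearEquivOfBilin (fun w => rfl)
  exact ⟨ContinuousLinearEquiv.toUnit coercive.continuousLinearEquivOfBilin, he.symm⟩

lemma regOp_inv_comp (A : X →L[ℝ] Y) {α : ℝ} (hα : 0 < α) :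
    Ring.inverse (regOp A α) ∘L regOp A α = 1 := by
  have := Ring.inverse_mul_cancel _ (isUnit_regOp A hα)
  rwa [mul_def] at this

lemma regOp_comp_inv (A : X →L[ℝ] Y) {α : ℝ} (hα : 0 < α) :
    regOp A α ∘L Ring.inverse (regOp A α) = 1 := by
  have := Ring.mul_inverse_cancel _ (isUnit_regOp A hα)
  rwa [mul_def] at this

lemma norm_regOp_inv_le (A : X →L[ℝ] Y) {α : ℝ} (hα : 0 < α) :
    ‖Ring.inverse (regOp A α)‖ ≤ 1 / α := by
  refine opNorm_le_bound _ (by positivity) fun y => ?_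
  set x := Ring.inverse (regOp A α) y with hxdef
  have hx : regOp A α x = y := by
    have := congrArg (fun T => T y) (regOp_comp_inv A hα)
    simpa using this
  have h1 : α * ‖x‖ ^ 2 ≤ ‖y‖ * ‖x‖ := by
    have h2 : ⟪regOp A α x, x⟫_ℝ ≤ ‖y‖ * ‖x‖ := by
      rw [hx]; exact real_inner_le_norm y x
    have := regOp_inner A α x
    nlinarith [sq_nonneg ‖A x‖]
  rcases eq_or_lt_of_le (norm_nonneg x) with h | h
  · rw [← h]; positivity
  · rw [div_mul_eq_mul_div, le_div_iff₀ hα]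
    nlinarith

lemma norm_regOp_inv_comp_adjoint_le (A : X →L[ℝ] Y) {α : ℝ} (hα : 0 < α) :
    ‖Ring.inverse (regOp A α) ∘L adjoint A‖ ≤ 1 / (2 * Real.sqrt α) := by
  have hs : Real.sqrt α * Real.sqrt α = α := Real.mul_self_sqrt hα.le
  have hs0 : 0 < Real.sqrt α := Real.sqrt_pos.mpr hα
  refine opNorm_le_bound _ (by positivity) fun y => ?_
  set x := Ring.inverse (regOp A α) (adjoint A y) with hxdef
  have hx : regOp A α x = adjoint A y := by
    have := congrArg (fun T => T (adjoint A y)) (regOp_comp_inv A hα)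
    simpa using this
  have h1 : ‖A x‖ ^ 2 + α * ‖x‖ ^ 2 ≤ ‖y‖ * ‖A x‖ := by
    have h2 : ⟪regOp A α x, x⟫_ℝ = ⟪y, A x⟫_ℝ := by
      rw [hx, adjoint_inner_left]
    rw [← regOp_inner A α x, h2]
    exact real_inner_le_norm y (A x)
  have key : α * ‖x‖ ^ 2 ≤ ‖y‖ ^ 2 / 4 := by nlinarith [sq_nonneg (‖A x‖ - ‖y‖ / 2)]
  have h3 : 2 * Real.sqrt α * ‖x‖ ≤ ‖y‖ := by
    nlinarith [norm_nonneg x, norm_nonneg y, sq_nonneg (2 * Real.sqrt α * ‖x‖ + ‖y‖),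
      sq_nonneg (2 * Real.sqrt α * ‖x‖ - ‖y‖)]
  calc ‖x‖ ≤ ‖y‖ / (2 * Real.sqrt α) := by
        rw [le_div_iff₀ (by positivity)]; linarith
    _ = 1 / (2 * Real.sqrt α) * ‖y‖ := by ring

lemma regOp_swap (A : X →L[ℝ] Y) (α : ℝ) :
    adjoint A ∘L regOp (adjoint A) α = regOp A α ∘L adjoint A := by
  simp only [regOp, adjoint_adjoint, comp_add, add_comp, comp_smul, smul_comp,
    ← comp_assoc]
  simp [one_def]

lemma regOp_inv_comp_adjoint (A : X →L[ℝ] Y) {α : ℝ} (hα : 0 < α) :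
    Ring.inverse (regOp A α) ∘L adjoint A =
      adjoint A ∘L Ring.inverse (regOp (adjoint A) α) := by
  calc Ring.inverse (regOp A α) ∘L adjoint A
      = Ring.inverse (regOp A α) ∘L adjoint A ∘L
          (regOp (adjoint A) α ∘L Ring.inverse (regOp (adjoint A) α)) := by
        rw [regOp_comp_inv (adjoint A) hα]; simp [one_def]
    _ = Ring.inverse (regOp A α) ∘L (adjoint A ∘L regOp (adjoint A) α) ∘L
          Ring.inverse (regOp (adjoint A) α) := by simp only [comp_assoc]
    _ = (Ring.inverse (regOp A α) ∘L regOp A α) ∘L adjoint A ∘L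
          Ring.inverse (regOp (adjoint A) α) := by
        rw [regOp_swap]; simp only [comp_assoc]
    _ = adjoint A ∘L Ring.inverse (regOp (adjoint A) α) := by
        rw [regOp_inv_comp A hα]; simp [one_def]

end Aux

variable {X Y : Type*} [NormedAddCommGroup X] [InnerProductSpace ℝ X] [CompleteSpace X]
  [NormedAddCommGroup Y] [InnerProductSpace ℝ Y] [CompleteSpace Y]

set_option maxHeartbeats 1000000 in
theorem stmt_4 (A Aη : X →L[ℝ] Y) (η : ℝ) (hη : ‖A - Aη‖ ≤ η) (α : ℝ) (hα : 0 < α) :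
    ‖Ring.inverse (adjoint Aη ∘L Aη + α • (1 : X →L[ℝ] X)) ∘L adjoint Aη -
        Ring.inverse (adjoint A ∘L A + α • (1 : X →L[ℝ] X)) ∘L adjoint A‖ ≤
      5 / 4 * η / α := by
  have e1 : (adjoint Aη ∘L Aη + α • (1 : X →L[ℝ] X)) = regOp Aη α := rfl
  have e2 : (adjoint A ∘L A + α • (1 : X →L[ℝ] X)) = regOp A α := rfl
  rw [e1, e2]
  set D : X →L[ℝ] Y := Aη - A with hD
  set ISη := Ring.inverse (regOp Aη α) with hISη
  set IS := Ring.inverse (regOp A α) with hIS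
  set IS' := Ring.inverse (regOp (adjoint A) α) with hIS'
  -- the polynomial identity
  have P : adjoint Aη ∘L regOp (adjoint A) α + adjoint Aη ∘L (D ∘L adjoint A) =
      regOp Aη α ∘L adjoint A + α • adjoint D := by
    simp only [hD, regOp, adjoint_adjoint, map_sub, comp_add, add_comp, comp_sub, sub_comp,
      comp_smul, smul_comp, smul_sub, comp_assoc]
    simp only [one_def, id_comp, comp_id]
    abel
  -- compose with `IS'` on the right
  have P2 : adjoint Aη + adjoint Aη ∘L (D ∘L (IS ∘L adjoint A)) =
      regOp Aη α ∘L (IS ∘L adjoint A) + α • (adjoint D ∘L IS') := by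
    have := congrArg (fun T => T ∘L IS') P
    simp only [add_comp, smul_comp, comp_assoc] at this
    rw [hIS', regOp_comp_inv (adjoint A) hα, ← hIS',
      ← regOp_inv_comp_adjoint A hα, ← hIS] at this
    simpa [one_def] using this
  -- compose with `ISη` on the left
  have P3 : ISη ∘L adjoint Aη + ISη ∘L (adjoint Aη ∘L (D ∘L (IS ∘L adjoint A))) =
      IS ∘L adjoint A + α • (ISη ∘L (adjoint D ∘L IS')) := by
    have := congrArg (fun T => ISη ∘L T) P2
    simp only [comp_add, comp_smulₛₗ, RingHom.id_apply] at this
    rw [← comp_assoc ISη (regOp Aη α), hISη, regOp_inv_comp Aη hα] at this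
    simpa [one_def] using this
  have key : ISη ∘L adjoint Aη - IS ∘L adjoint A =
      α • (ISη ∘L (adjoint D ∘L IS')) -
        ISη ∘L (adjoint Aη ∘L (D ∘L (IS ∘L adjoint A))) := by
    rw [sub_eq_sub_iff_add_eq_add, P3, add_comm]
  rw [key]
  -- norm estimates
  have hη0 : 0 ≤ η := le_trans (norm_nonneg _) hη
  have hDn : ‖D‖ ≤ η := by rw [hD, norm_sub_rev]; exact hη
  have hDadj : ‖adjoint D‖ ≤ η := by
    rw [show ‖(adjoint D : Y →L[ℝ] X)‖ = ‖D‖ from adjoint.norm_map D]; exact hDn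
  have hs : Real.sqrt α * Real.sqrt α = α := Real.mul_self_sqrt hα.le
  have hs0 : 0 < Real.sqrt α := Real.sqrt_pos.mpr hα
  have b1 : ‖ISη ∘L (adjoint D ∘L IS')‖ ≤ 1 / α * (η * (1 / α)) := by
    calc ‖ISη ∘L (adjoint D ∘L IS')‖ ≤ ‖ISη‖ * ‖adjoint D ∘L IS'‖ := opNorm_comp_le _ _
      _ ≤ ‖ISη‖ * (‖adjoint D‖ * ‖IS'‖) :=
          mul_le_mul_of_nonneg_left (opNorm_comp_le _ _) (norm_nonneg _)
      _ ≤ 1 / α * (η * (1 / α)) :=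
          mul_le_mul (norm_regOp_inv_le Aη hα)
            (mul_le_mul hDadj (norm_regOp_inv_le (adjoint A) hα) (norm_nonneg _) hη0)
            (mul_nonneg (norm_nonneg _) (norm_nonneg _)) (by positivity)
  have b2 : ‖ISη ∘L (adjoint Aη ∘L (D ∘L (IS ∘L adjoint A)))‖ ≤
      1 / (2 * Real.sqrt α) * (η * (1 / (2 * Real.sqrt α))) := by
    rw [← comp_assoc]
    calc ‖(ISη ∘L adjoint Aη) ∘L (D ∘L (IS ∘L adjoint A))‖
        ≤ ‖ISη ∘L adjoint Aη‖ * ‖D ∘L (IS ∘L adjoint A)‖ := opNorm_comp_le _ _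
      _ ≤ ‖ISη ∘L adjoint Aη‖ * (‖D‖ * ‖IS ∘L adjoint A‖) :=
          mul_le_mul_of_nonneg_left (opNorm_comp_le _ _) (norm_nonneg _)
      _ ≤ 1 / (2 * Real.sqrt α) * (η * (1 / (2 * Real.sqrt α))) :=
          mul_le_mul (norm_regOp_inv_comp_adjoint_le Aη hα)
            (mul_le_mul hDn (norm_regOp_inv_comp_adjoint_le A hα) (norm_nonneg _) hη0)
            (mul_nonneg (norm_nonneg _) (norm_nonneg _)) (by positivity)
  calc ‖α • (ISη ∘L (adjoint D ∘L IS')) -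
        ISη ∘L (adjoint Aη ∘L (D ∘L (IS ∘L adjoint A)))‖
      ≤ ‖α • (ISη ∘L (adjoint D ∘L IS'))‖ +
        ‖ISη ∘L (adjoint Aη ∘L (D ∘L (IS ∘L adjoint A)))‖ := norm_sub_le _ _
    _ = α * ‖ISη ∘L (adjoint D ∘L IS')‖ +
        ‖ISη ∘L (adjoint Aη ∘L (D ∘L (IS ∘L adjoint A)))‖ := by
        rw [norm_smul α (ISη ∘L (adjoint D ∘L IS')), Real.norm_eq_abs, abs_of_pos hα]
    _ ≤ α * (1 / α * (η * (1 / α))) +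
        1 / (2 * Real.sqrt α) * (η * (1 / (2 * Real.sqrt α))) := by
        gcongr
    _ = 5 / 4 * η / α := by
        field_simp
        linear_combination (-4 * η) * hs
end

section
/- Let X, Y be Hilbert spaces, A, A_η : X → Y bounded with ‖A − A_η‖ ≤ η, and α > 0. Then ‖(A_η*A_η + αI)⁻¹ A_η*A_η − (A*A + αI)⁻¹ A*A‖ ≤ η/√α. -/
open ContinuousLinearMap Filter

variable {X Y : Type*} [NormedAddCommGroup X] [InnerProductSpace ℝ X] [CompleteSpace X]
  [NormedAddCommGroup Y] [InnerProductSpace ℝ Y] [CompleteSpace Y]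

section aux
variable (A : X →L[ℝ] Y) {α : ℝ} (hα : 0 < α)

local notation "T" => adjoint A ∘L A + α • (1 : X →L[ℝ] X)

lemma inner_T (x : X) : (inner ℝ ((adjoint A ∘L A + α • (1 : X →L[ℝ] X)) x) x : ℝ)
    = ‖A x‖ ^ 2 + α * ‖x‖ ^ 2 := by
  simp [ContinuousLinearMap.add_apply, comp_apply, smul_apply, one_apply,
    inner_add_left, adjoint_inner_left, real_inner_self_eq_norm_sq,
    real_inner_smul_left]

lemma lower_T (x : X) : α * ‖x‖ ≤ ‖(adjoint A ∘L A + α • (1 : X →L[ℝ] X)) x‖ := by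
  rcases eq_or_ne x 0 with rfl | hx
  · simp
  · have h1 : α * ‖x‖ * ‖x‖ ≤ ‖T x‖ * ‖x‖ := by
      calc α * ‖x‖ * ‖x‖ ≤ ‖A x‖ ^ 2 + α * ‖x‖ ^ 2 := by nlinarith [sq_nonneg ‖A x‖]
        _ = (inner ℝ (T x) x : ℝ) := (inner_T A x).symm
        _ ≤ ‖T x‖ * ‖x‖ := real_inner_le_norm _ _
    exact le_of_mul_le_mul_right h1 (norm_pos_iff.mpr hx)

include hα in
lemma isUnit_T : IsUnit T := by
  have hinj : AntilipschitzWith (α⁻¹).toNNReal T := by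
    refine ContinuousLinearMap.antilipschitz_of_bound _ fun x => ?_
    rw [Real.coe_toNNReal _ (le_of_lt (inv_pos.mpr hα))]
    calc ‖x‖ = α⁻¹ * (α * ‖x‖) := by field_simp
      _ ≤ α⁻¹ * ‖T x‖ := by
          have := lower_T A (α := α) x
          gcongr
  have hker : LinearMap.ker (T : X →ₗ[ℝ] X) = ⊥ := LinearMap.ker_eq_bot.mpr hinj.injective
  have hclosed : IsClosed (LinearMap.range (T : X →ₗ[ℝ] X) : Set X) :=
    hinj.isClosed_range (T).uniformContinuous
  have hrange : LinearMap.range (T : X →ₗ[ℝ] X) = ⊤ := by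
    haveI := hclosed.completeSpace_coe
    rw [← (LinearMap.range (T : X →ₗ[ℝ] X)).orthogonal_orthogonal, Submodule.eq_top_iff']
    intro v w hw
    obtain rfl : w = 0 := by
      have h0 : (inner ℝ (T w) w : ℝ) = 0 := hw _ ⟨w, rfl⟩
      rw [inner_T] at h0
      have h2 : ‖w‖ ^ 2 = 0 := by nlinarith [sq_nonneg ‖A w‖, sq_nonneg ‖w‖]
      simpa using pow_eq_zero_iff (n := 2) (by norm_num) |>.mp h2
    exact inner_zero_left _
  exact ⟨(ContinuousLinearEquiv.ofBijective T hker hrange).toUnit, rfl⟩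
end aux

section aux2
variable (A : X →L[ℝ] Y) {α : ℝ} (hα : 0 < α)

local notation "T" => adjoint A ∘L A + α • (1 : X →L[ℝ] X)

include hα in
lemma apply_inv_T (y : X) : (adjoint A ∘L A + α • (1 : X →L[ℝ] X)) (Ring.inverse T y) = y := by
  have h1 := Ring.mul_inverse_cancel T (isUnit_T A hα)
  have := DFunLike.congr_fun h1 y
  simpa [ContinuousLinearMap.mul_apply] using this

include hα in
lemma norm_inv_T_le : ‖Ring.inverse T‖ ≤ 1 / α := by
  refine opNorm_le_bound _ (by positivity) fun y => ?_
  have h1 := lower_T A (α := α) (Ring.inverse T y)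
  rw [apply_inv_T A hα y] at h1
  rw [div_mul_eq_mul_div, le_div_iff₀ hα]
  linarith

include hα in
lemma norm_inv_T_adjoint_le :
    ‖Ring.inverse T ∘L adjoint A‖ ≤ 1 / (2 * Real.sqrt α) := by
  have hsa : 0 < Real.sqrt α := Real.sqrt_pos.mpr hα
  have hsa2 : Real.sqrt α ^ 2 = α := Real.sq_sqrt hα.le
  refine opNorm_le_bound _ (by positivity) fun y => ?_
  set x := Ring.inverse T (adjoint A y) with hx
  have hTx : (adjoint A ∘L A + α • (1 : X →L[ℝ] X)) x = adjoint A y := apply_inv_T A hα _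
  have hinner : ‖A x‖ ^ 2 + α * ‖x‖ ^ 2 ≤ ‖y‖ * ‖A x‖ := by
    calc ‖A x‖ ^ 2 + α * ‖x‖ ^ 2 = (inner ℝ ((adjoint A ∘L A + α • (1 : X →L[ℝ] X)) x) x : ℝ) :=
          (inner_T A x).symm
      _ = (inner ℝ (adjoint A y) x : ℝ) := by rw [hTx]
      _ = (inner ℝ y (A x) : ℝ) := adjoint_inner_left A x y
      _ ≤ ‖y‖ * ‖A x‖ := real_inner_le_norm _ _
  simp only [comp_apply, ← hx]
  by_cases hAx : ‖A x‖ = 0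
  · rw [hAx] at hinner
    norm_num at hinner
    have hx0 : ‖x‖ ^ 2 ≤ 0 := by nlinarith
    have hx1 : ‖x‖ = 0 := by
      have := le_antisymm hx0 (sq_nonneg _)
      exact pow_eq_zero_iff two_ne_zero |>.mp this
    rw [hx1]
    positivity
  · have h2 : 0 < ‖A x‖ := lt_of_le_of_ne (norm_nonneg _) (Ne.symm hAx)
    have h3 : 2 * Real.sqrt α * ‖x‖ * ‖A x‖ ≤ ‖y‖ * ‖A x‖ := by
      nlinarith [sq_nonneg (‖A x‖ - Real.sqrt α * ‖x‖)]
    have h4 : 2 * Real.sqrt α * ‖x‖ ≤ ‖y‖ := le_of_mul_le_mul_right h3 h2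
    rw [div_mul_eq_mul_div, le_div_iff₀ (by positivity)]
    linarith

lemma star_T : star T = T := by
  have : star (T : X →L[ℝ] X) = adjoint T := star_eq_adjoint _
  rw [this, map_add, adjoint_comp, adjoint_adjoint]
  congr 1
  rw [← star_eq_adjoint, star_smul, star_one, star_trivial]

lemma adjoint_inv_T : adjoint (Ring.inverse T) = Ring.inverse T := by
  rw [← star_eq_adjoint, ← Ring.inverse_star, star_T]

include hα in
lemma norm_comp_inv_T_le :
    ‖A ∘L Ring.inverse T‖ ≤ 1 / (2 * Real.sqrt α) := by
  have h1 : A ∘L Ring.inverse T = adjoint (Ring.inverse T ∘L adjoint A) := by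
    rw [adjoint_comp, adjoint_adjoint, adjoint_inv_T]
  rw [h1, LinearIsometryEquiv.norm_map]
  exact norm_inv_T_adjoint_le A hα

end aux2

set_option maxHeartbeats 1000000 in
set_option synthInstance.maxHeartbeats 1000000 in
theorem stmt_5 (A Aη : X →L[ℝ] Y) (η : ℝ) (hη : ‖A - Aη‖ ≤ η) (α : ℝ) (hα : 0 < α) :
    ‖Ring.inverse (adjoint Aη ∘L Aη + α • (1 : X →L[ℝ] X)) ∘L (adjoint Aη ∘L Aη) -
        Ring.inverse (adjoint A ∘L A + α • (1 : X →L[ℝ] X)) ∘L (adjoint A ∘L A)‖ ≤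
      η / Real.sqrt α := by
  have hη0 : 0 ≤ η := le_trans (norm_nonneg _) hη
  have hsa : 0 < Real.sqrt α := Real.sqrt_pos.mpr hα
  set TA := adjoint A ∘L A + α • (1 : X →L[ℝ] X) with hTA
  set Tη := adjoint Aη ∘L Aη + α • (1 : X →L[ℝ] X) with hTη
  set u := Ring.inverse TA with hu
  set uη := Ring.inverse Tη with huη
  have hUA : IsUnit TA := isUnit_T A hα
  have hUη : IsUnit Tη := isUnit_T Aη hα
  have hu2 : TA * u = 1 := Ring.mul_inverse_cancel _ hUA
  have hη1 : uη * Tη = 1 := Ring.inverse_mul_cancel _ hUη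
  have e3 : uη * (Tη - TA) * u = u - uη := by
    rw [mul_sub, sub_mul, hη1, one_mul, mul_assoc, hu2, mul_one]
  have eA : u ∘L (adjoint A ∘L A) = 1 - α • u := by
    have h : (adjoint A ∘L A : X →L[ℝ] X) = TA - α • 1 := by rw [hTA]; abel
    rw [← mul_def, h, mul_sub, hu, Ring.inverse_mul_cancel _ hUA, mul_smul_comm, mul_one]
  have eη : uη ∘L (adjoint Aη ∘L Aη) = 1 - α • uη := by
    have h : (adjoint Aη ∘L Aη : X →L[ℝ] X) = Tη - α • 1 := by rw [hTη]; abel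
    rw [← mul_def, h, mul_sub, huη, Ring.inverse_mul_cancel _ hUη, mul_smul_comm, mul_one]
  have hsplit : Tη - TA = adjoint Aη ∘L (Aη - A) + adjoint (Aη - A) ∘L A := by
    rw [hTA, hTη, map_sub, sub_comp, comp_sub]
    abel
  have key : uη ∘L (adjoint Aη ∘L Aη) - u ∘L (adjoint A ∘L A)
      = α • ((uη ∘L adjoint Aη) ∘L ((Aη - A) ∘L u) + uη ∘L (adjoint (Aη - A) ∘L (A ∘L u))) := by
    have h6 : (uη ∘L adjoint Aη) ∘L ((Aη - A) ∘L u) + uη ∘L (adjoint (Aη - A) ∘L (A ∘L u))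
        = uη * (Tη - TA) * u := by
      rw [hsplit]
      simp only [mul_def, add_comp, comp_add, comp_assoc, add_mul, mul_add]
    rw [eη, eA, h6, e3, smul_sub]
    abel
  rw [key]
  have b1 : ‖uη ∘L adjoint Aη‖ ≤ 1 / (2 * Real.sqrt α) := norm_inv_T_adjoint_le Aη hα
  have b2 : ‖A ∘L u‖ ≤ 1 / (2 * Real.sqrt α) := norm_comp_inv_T_le A hα
  have b3 : ‖uη‖ ≤ 1 / α := norm_inv_T_le Aη hα
  have b4 : ‖u‖ ≤ 1 / α := norm_inv_T_le A hα
  have bD : ‖Aη - A‖ ≤ η := by rw [norm_sub_rev]; exact hη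
  have bDa : ‖adjoint (Aη - A)‖ ≤ η := by rw [LinearIsometryEquiv.norm_map]; exact bD
  have t1 : ‖(uη ∘L adjoint Aη) ∘L ((Aη - A) ∘L u)‖ ≤ (1 / (2 * Real.sqrt α)) * (η * (1 / α)) := by
    have h5 : ‖(Aη - A) ∘L u‖ ≤ η * (1 / α) :=
      le_trans (opNorm_comp_le _ _) (mul_le_mul bD b4 (norm_nonneg _) hη0)
    exact le_trans (opNorm_comp_le _ _) (mul_le_mul b1 h5 (norm_nonneg _) (by positivity))
  have t2 : ‖uη ∘L (adjoint (Aη - A) ∘L (A ∘L u))‖ ≤ (1 / α) * (η * (1 / (2 * Real.sqrt α))) := by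
    have h5 : ‖adjoint (Aη - A) ∘L (A ∘L u)‖ ≤ η * (1 / (2 * Real.sqrt α)) :=
      le_trans (opNorm_comp_le _ _) (mul_le_mul bDa b2 (norm_nonneg _) hη0)
    exact le_trans (opNorm_comp_le _ _) (mul_le_mul b3 h5 (norm_nonneg _) (by positivity))
  calc ‖α • ((uη ∘L adjoint Aη) ∘L ((Aη - A) ∘L u) + uη ∘L (adjoint (Aη - A) ∘L (A ∘L u)))‖
      ≤ α * ‖(uη ∘L adjoint Aη) ∘L ((Aη - A) ∘L u) + uη ∘L (adjoint (Aη - A) ∘L (A ∘L u))‖ := by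
        simpa [Real.norm_eq_abs, abs_of_pos hα] using
          norm_smul_le α ((uη ∘L adjoint Aη) ∘L ((Aη - A) ∘L u) +
            uη ∘L (adjoint (Aη - A) ∘L (A ∘L u)))
    _ ≤ α * (‖(uη ∘L adjoint Aη) ∘L ((Aη - A) ∘L u)‖ + ‖uη ∘L (adjoint (Aη - A) ∘L (A ∘L u))‖) :=
        mul_le_mul_of_nonneg_left (norm_add_le _ _) hα.le
    _ ≤ α * ((1 / (2 * Real.sqrt α)) * (η * (1 / α)) + (1 / α) * (η * (1 / (2 * Real.sqrt α)))) :=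
        mul_le_mul_of_nonneg_left (add_le_add t1 t2) hα.le
    _ = η / Real.sqrt α := by
        field_simp
        ring
end

section
/- Let X, Y be Hilbert spaces, A, A_η : X → Y bounded with ‖A − A_η‖ ≤ η, α > 0, and x† ∈ X. With ψ_HD(α, B, z) = ‖√α (BB* + αI)⁻¹ z‖, there is a constant C (one may take C = 5/4) such that ψ_HD(α, A_η, A_η x†) ≤ C·η‖x†‖/√α + ψ_HD(α, A, A x†). -/
open ContinuousLinearMap Filter

open RealInnerProductSpace

variable {X Y : Type*} [NormedAddCommGroup X] [InnerProductSpace ℝ X] [CompleteSpace X]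
  [NormedAddCommGroup Y] [InnerProductSpace ℝ Y] [CompleteSpace Y]

noncomputable def Sop (B : X →L[ℝ] Y) (α : ℝ) : X →L[ℝ] X :=
  adjoint B ∘L B + α • (1 : X →L[ℝ] X)

lemma Sop_apply (B : X →L[ℝ] Y) (α : ℝ) (x : X) :
    Sop B α x = adjoint B (B x) + α • x := rfl

lemma Sop_inner (B : X →L[ℝ] Y) (α : ℝ) (x : X) :
    ⟪Sop B α x, x⟫ = ‖B x‖ ^ 2 + α * ‖x‖ ^ 2 := by
  simp [Sop_apply, inner_add_left, real_inner_smul_left, adjoint_inner_left,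
    real_inner_self_eq_norm_sq]

lemma isUnit_of_coercive {T : X →L[ℝ] X} {C : ℝ} (hC : 0 < C)
    (h : ∀ u, C * ‖u‖ * ‖u‖ ≤ ⟪T u, u⟫) : IsUnit T := by
  have hc : IsCoercive ((innerSL ℝ).comp T) := ⟨C, hC, fun u => by simpa using h u⟩
  have hET : ∀ v, hc.continuousLinearEquivOfBilin v = T v := fun v =>
    ext_inner_right ℝ fun w => by
      rw [hc.continuousLinearEquivOfBilin_apply]; simp
  refine ⟨⟨T, (hc.continuousLinearEquivOfBilin.symm : X →L[ℝ] X), ?_, ?_⟩, rfl⟩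
  · ext y
    simp only [ContinuousLinearMap.mul_apply, ContinuousLinearMap.one_apply,
      ContinuousLinearEquiv.coe_coe]
    rw [← hET]
    exact hc.continuousLinearEquivOfBilin.apply_symm_apply y
  · ext y
    simp only [ContinuousLinearMap.mul_apply, ContinuousLinearMap.one_apply,
      ContinuousLinearEquiv.coe_coe]
    rw [← hET y]
    exact hc.continuousLinearEquivOfBilin.symm_apply_apply y

lemma isUnit_Sop (B : X →L[ℝ] Y) {α : ℝ} (hα : 0 < α) : IsUnit (Sop B α) :=
  isUnit_of_coercive hα (fun u => by
    rw [Sop_inner]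
    nlinarith [sq_nonneg ‖B u‖, sq_abs ‖u‖])

lemma inv_cancel_left {T : X →L[ℝ] X} (h : IsUnit T) (z : X) :
    Ring.inverse T (T z) = z := by
  have h1 := Ring.inverse_mul_cancel T h
  calc Ring.inverse T (T z) = (Ring.inverse T * T) z := rfl
    _ = z := by rw [h1]; rfl

lemma inv_cancel_right {T : X →L[ℝ] X} (h : IsUnit T) (z : X) :
    T (Ring.inverse T z) = z := by
  have h1 := Ring.mul_inverse_cancel T h
  calc T (Ring.inverse T z) = (T * Ring.inverse T) z := rfl
    _ = z := by rw [h1]; rfl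

lemma inverse_Sop_norm_le (B : X →L[ℝ] Y) {α : ℝ} (hα : 0 < α) (x : X) :
    ‖Ring.inverse (Sop B α) x‖ ≤ ‖x‖ / α := by
  set u := Ring.inverse (Sop B α) x with hu
  have h1 : Sop B α u = x := inv_cancel_right (isUnit_Sop B hα) x
  have h2 : α * ‖u‖ ^ 2 ≤ ⟪x, u⟫ := by
    rw [← h1, Sop_inner]; nlinarith [sq_nonneg ‖B u‖]
  have h3 : ⟪x, u⟫ ≤ ‖x‖ * ‖u‖ := real_inner_le_norm x u
  rcases (norm_nonneg u).eq_or_lt with h0 | h0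
  · rw [← h0]; positivity
  · rw [le_div_iff₀ hα]; nlinarith

lemma norm_apply_inverse_Sop_le (B : X →L[ℝ] Y) {α : ℝ} (hα : 0 < α) (x : X) :
    ‖B (Ring.inverse (Sop B α) x)‖ ≤ ‖x‖ / (2 * Real.sqrt α) := by
  set u := Ring.inverse (Sop B α) x with hu
  have h1 : Sop B α u = x := inv_cancel_right (isUnit_Sop B hα) x
  have hin : ⟪adjoint B (B u), u⟫ = ‖B u‖ ^ 2 := by
    rw [adjoint_inner_left, real_inner_self_eq_norm_sq]
  have hcs : ⟪adjoint B (B u), u⟫ ≤ ‖adjoint B (B u)‖ * ‖u‖ := real_inner_le_norm _ _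
  have hx2 : ‖x‖ ^ 2 = ‖adjoint B (B u)‖ ^ 2 + 2 * α * ‖B u‖ ^ 2 + α ^ 2 * ‖u‖ ^ 2 := by
    rw [← h1, Sop_apply, norm_add_sq_real, real_inner_smul_right, hin, norm_smul]
    rw [Real.norm_eq_abs, abs_of_pos hα]
    ring
  have hs0 : 0 < Real.sqrt α := Real.sqrt_pos.mpr hα
  have hs : Real.sqrt α ^ 2 = α := Real.sq_sqrt hα.le
  rw [le_div_iff₀ (by positivity)]
  nlinarith [sq_nonneg (‖adjoint B (B u)‖ - α * ‖u‖), norm_nonneg (B u), norm_nonneg x,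
    sq_nonneg (‖B u‖ * (2 * Real.sqrt α) - ‖x‖), norm_nonneg u, mul_nonneg (norm_nonneg (B u)) hs0.le]

lemma inverse_comm (B : X →L[ℝ] Y) {α : ℝ} (hα : 0 < α) (z : X) :
    Ring.inverse (Sop (adjoint B) α) (B z) = B (Ring.inverse (Sop B α) z) := by
  set R := Ring.inverse (Sop B α) with hR
  have h1 : B z = Sop (adjoint B) α (B (R z)) := by
    conv_lhs => rw [← inv_cancel_right (isUnit_Sop B hα) z]
    rw [Sop_apply, Sop_apply, adjoint_adjoint, map_add, map_smul]
  rw [h1, inv_cancel_left (isUnit_Sop (adjoint B) hα)]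

lemma one_sub_eq (B : X →L[ℝ] Y) {α : ℝ} (hα : 0 < α) (w : Y) :
    w - B (Ring.inverse (Sop B α) (adjoint B w)) =
      α • Ring.inverse (Sop (adjoint B) α) w := by
  have h1 : B (Ring.inverse (Sop B α) (adjoint B w)) =
      Ring.inverse (Sop (adjoint B) α) (B (adjoint B w)) :=
    (inverse_comm B hα (adjoint B w)).symm
  have h2 : B (adjoint B w) = Sop (adjoint B) α w - α • w := by
    rw [Sop_apply, adjoint_adjoint]; abel
  rw [h1, h2, map_sub, map_smul, inv_cancel_left (isUnit_Sop (adjoint B) hα)]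
  abel

theorem stmt_17 (A Aη : X →L[ℝ] Y) (η : ℝ) (hη : ‖A - Aη‖ ≤ η) (α : ℝ) (hα : 0 < α)
    (xdag : X) :
    Real.sqrt α * ‖(Ring.inverse (Aη ∘L adjoint Aη + α • (1 : Y →L[ℝ] Y))) (Aη xdag)‖ ≤
      5 / 4 * η * ‖xdag‖ / Real.sqrt α +
        Real.sqrt α *
          ‖(Ring.inverse (A ∘L adjoint A + α • (1 : Y →L[ℝ] Y))) (A xdag)‖ := by
  have hTopA : A ∘L adjoint A + α • (1 : Y →L[ℝ] Y) = Sop (adjoint A) α := by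
    rw [Sop]; rw [adjoint_adjoint]
  have hTopAη : Aη ∘L adjoint Aη + α • (1 : Y →L[ℝ] Y) = Sop (adjoint Aη) α := by
    rw [Sop]; rw [adjoint_adjoint]
  rw [hTopA, hTopAη, inverse_comm A hα, inverse_comm Aη hα]
  set R := Ring.inverse (Sop A α) with hRdef
  set Rη := Ring.inverse (Sop Aη α) with hRηdef
  set u := Rη xdag with hudef
  set v := R xdag with hvdef
  have hη0 : 0 ≤ η := le_trans (norm_nonneg _) hη
  have hs0 : 0 < Real.sqrt α := Real.sqrt_pos.mpr hα
  have hs : Real.sqrt α ^ 2 = α := Real.sq_sqrt hα.le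
  -- key vector identity
  have hAu : R (adjoint A (A u)) = u - α • R u := by
    have : adjoint A (A u) = Sop A α u - α • u := by rw [Sop_apply]; abel
    rw [this, map_sub, map_smul, inv_cancel_left (isUnit_Sop A hα)]
  have hAηu : R (adjoint Aη (Aη u)) = v - α • R u := by
    have : adjoint Aη (Aη u) = Sop Aη α u - α • u := by rw [Sop_apply]; abel
    rw [this, map_sub, map_smul, hudef, inv_cancel_right (isUnit_Sop Aη hα)]
  have key : Aη u - A v =
      ((Aη - A) u - A (R (adjoint A ((Aη - A) u)))) +
        A (R (adjoint (A - Aη) (Aη u))) := by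
    simp only [ContinuousLinearMap.sub_apply, map_sub, hAu, hAηu, map_smul]
    abel
  -- norm bounds
  have hu_norm : ‖u‖ ≤ ‖xdag‖ / α := inverse_Sop_norm_le Aη hα xdag
  have hAηu_norm : ‖Aη u‖ ≤ ‖xdag‖ / (2 * Real.sqrt α) :=
    norm_apply_inverse_Sop_le Aη hα xdag
  have hw_norm : ‖(Aη - A) u‖ ≤ η * (‖xdag‖ / α) := by
    calc ‖(Aη - A) u‖ ≤ ‖Aη - A‖ * ‖u‖ := le_opNorm _ _
      _ ≤ η * (‖xdag‖ / α) := by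
        apply mul_le_mul _ hu_norm (norm_nonneg u) hη0
        rwa [norm_sub_rev]
  have hz_norm : ‖(Aη - A) u - A (R (adjoint A ((Aη - A) u)))‖ ≤ η * ‖xdag‖ / α := by
    rw [one_sub_eq A hα ((Aη - A) u), norm_smul, Real.norm_eq_abs, abs_of_pos hα]
    calc α * ‖Ring.inverse (Sop (adjoint A) α) ((Aη - A) u)‖
        ≤ α * (‖(Aη - A) u‖ / α) :=
          mul_le_mul_of_nonneg_left (inverse_Sop_norm_le (adjoint A) hα _) hα.le
      _ = ‖(Aη - A) u‖ := by field_simp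
      _ ≤ η * (‖xdag‖ / α) := hw_norm
      _ = η * ‖xdag‖ / α := by ring
  have ht_norm : ‖A (R (adjoint (A - Aη) (Aη u)))‖ ≤ η * ‖xdag‖ / (4 * α) := by
    calc ‖A (R (adjoint (A - Aη) (Aη u)))‖
        ≤ ‖adjoint (A - Aη) (Aη u)‖ / (2 * Real.sqrt α) :=
          norm_apply_inverse_Sop_le A hα _
      _ ≤ (η * (‖xdag‖ / (2 * Real.sqrt α))) / (2 * Real.sqrt α) := by
          apply div_le_div_of_nonneg_right ?_ (by positivity)
          calc ‖adjoint (A - Aη) (Aη u)‖ ≤ ‖adjoint (A - Aη)‖ * ‖Aη u‖ := le_opNorm _ _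
            _ ≤ η * (‖xdag‖ / (2 * Real.sqrt α)) := by
                apply mul_le_mul _ hAηu_norm (norm_nonneg _) hη0
                rw [ContinuousLinearMap.adjoint.norm_map (A - Aη)]
                exact hη
      _ = η * ‖xdag‖ / (4 * α) := by
          rw [mul_div_assoc', div_div]
          congr 1
          linear_combination (4 : ℝ) * hs
  have h5 : ‖Aη u - A v‖ ≤ η * ‖xdag‖ / α + η * ‖xdag‖ / (4 * α) := by
    rw [key]; exact le_trans (norm_add_le _ _) (add_le_add hz_norm ht_norm)
  have h6 : ‖Aη u‖ ≤ ‖A v‖ + (η * ‖xdag‖ / α + η * ‖xdag‖ / (4 * α)) := by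
    have := norm_sub_norm_le (Aη u) (A v)
    linarith
  have h7 : Real.sqrt α * (η * ‖xdag‖ / α + η * ‖xdag‖ / (4 * α)) =
      5 / 4 * η * ‖xdag‖ / Real.sqrt α := by
    field_simp
    linear_combination (5 * η * ‖xdag‖) * hs
  calc Real.sqrt α * ‖Aη u‖
      ≤ Real.sqrt α * (‖A v‖ + (η * ‖xdag‖ / α + η * ‖xdag‖ / (4 * α))) :=
        mul_le_mul_of_nonneg_left h6 hs0.le
    _ = 5 / 4 * η * ‖xdag‖ / Real.sqrt α + Real.sqrt α * ‖A v‖ := by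
        rw [mul_add, h7]; ring
end
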